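/- arXiv:2312.13910 — 2 statements merged into one kernel-verified Lean document; each statement's English description precedes it below -/
import Mathlib

section
/- For any sequence of nonnegative numbers x_1, ..., x_n satisfying 0 ≤ x_k ≤ X_{k-1} := max{1, Σ_{i=1}^{k-1} x_i} for all k, it holds that Σ_{k=1}^n x_k / √(X_{k-1}) ≤ (√2 + 1) · √(X_n). -/
open Finset

theorem stmt_0 (n : ℕ) (x : ℕ → ℝ) (X : ℕ → ℝ)
    (hX : ∀ k, X k = max 1 (∑ i ∈ Finset.range k, x i))
    (hx : ∀ k < n, 0 ≤ x k ∧ x k ≤ X k) :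
    ∑ k ∈ Finset.range n, x k / Real.sqrt (X k) ≤
      (Real.sqrt 2 + 1) * Real.sqrt (X n) := by
  suffices h : ∀ m, (∀ k < m, 0 ≤ x k ∧ x k ≤ X k) →
      ∑ k ∈ Finset.range m, x k / Real.sqrt (X k) ≤
        (Real.sqrt 2 + 1) * (Real.sqrt (X m) - 1) + min (∑ i ∈ Finset.range m, x i) 1 by
    have h2 := h n hx
    have hmin : min (∑ i ∈ Finset.range n, x i) 1 ≤ 1 := min_le_right _ _
    have hs2 : (0:ℝ) ≤ Real.sqrt 2 := Real.sqrt_nonneg 2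
    nlinarith
  intro m
  induction m with
  | zero =>
    intro _
    simp [hX 0]
  | succ m ih =>
    intro hx'
    have hxn := hx' m (by omega)
    have IH := ih (fun k hk => hx' k (by omega))
    have hS0 : 0 ≤ ∑ i ∈ Finset.range m, x i :=
      Finset.sum_nonneg fun i hi => (hx' i (by simp at hi; omega)).1
    rw [Finset.sum_range_succ, Finset.sum_range_succ]
    have hXm := hX m
    have hXm1 := hX (m+1)
    rw [Finset.sum_range_succ] at hXm1
    set S := ∑ i ∈ Finset.range m, x i with hSdef
    have h1X : (1:ℝ) ≤ X m := hXm ▸ le_max_left _ _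
    have hSX : S ≤ X m := hXm ▸ le_max_right _ _
    have hsq : Real.sqrt (X m) ^ 2 = X m := Real.sq_sqrt (by linarith)
    have hsqpos : 0 < Real.sqrt (X m) := Real.sqrt_pos.mpr (by linarith)
    have hs2 : (0:ℝ) ≤ Real.sqrt 2 := Real.sqrt_nonneg 2
    rcases le_or_gt 1 S with hc | hc
    · -- S ≥ 1 : X m = S, X (m+1) = X m + x m
      have hXmS : X m = S := by rw [hXm]; exact max_eq_right hc
      have hX1 : X (m+1) = X m + x m := by
        rw [hXm1, ← hXmS]; exact max_eq_right (by linarith [hxn.1])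
      have hmin1 : min (S + x m) 1 = 1 := min_eq_right (by linarith [hxn.1])
      have hmin2 : min S 1 = 1 := min_eq_right hc
      have key : x m / Real.sqrt (X m) ≤
          (Real.sqrt 2 + 1) * (Real.sqrt (X (m+1)) - Real.sqrt (X m)) := by
        rw [div_le_iff₀ hsqpos, hX1]
        have hb : Real.sqrt (X m + x m) ≤ Real.sqrt 2 * Real.sqrt (X m) := by
          rw [← Real.sqrt_mul (by norm_num)]
          exact Real.sqrt_le_sqrt (by linarith [hxn.2])
        have hba : Real.sqrt (X m) ≤ Real.sqrt (X m + x m) :=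
          Real.sqrt_le_sqrt (by linarith [hxn.1])
        have hbsq : Real.sqrt (X m + x m) ^ 2 = X m + x m :=
          Real.sq_sqrt (by linarith [hxn.1])
        have hkey : 0 ≤ (Real.sqrt (X m + x m) - Real.sqrt (X m)) *
            ((Real.sqrt 2 + 1) * Real.sqrt (X m)
              - (Real.sqrt (X m + x m) + Real.sqrt (X m))) :=
          mul_nonneg (by linarith) (by nlinarith)
        nlinarith
      rw [hmin1]
      rw [hmin2] at IH
      linarith [key]
    · -- S < 1 : X m = 1
      have hXmS : X m = 1 := by rw [hXm]; exact max_eq_left hc.le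
      have hmin2 : min S 1 = S := min_eq_left hc.le
      have e1 : Real.sqrt (X m) = 1 := by rw [hXmS, Real.sqrt_one]
      have hx1 : x m ≤ 1 := hXmS ▸ hxn.2
      rw [hmin2] at IH
      rw [e1] at IH
      rw [e1, div_one]
      rcases le_or_gt (S + x m) 1 with hd | hd
      · have hX1 : X (m+1) = 1 := by rw [hXm1]; exact max_eq_left hd
        have e2 : Real.sqrt (X (m+1)) = 1 := by rw [hX1, Real.sqrt_one]
        rw [min_eq_left hd, e2]
        linarith
      · have hX1 : X (m+1) = S + x m := by rw [hXm1]; exact max_eq_right hd.le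
        rw [min_eq_right hd.le, hX1]
        have ht2 : S + x m ≤ 2 := by linarith
        have hb1 : (1:ℝ) ≤ Real.sqrt (S + x m) := by
          have := Real.sqrt_le_sqrt (show (1:ℝ) ≤ S + x m from hd.le)
          rwa [Real.sqrt_one] at this
        have hb2 : Real.sqrt (S + x m) ≤ Real.sqrt 2 := Real.sqrt_le_sqrt ht2
        have hbsq : Real.sqrt (S + x m) ^ 2 = S + x m := Real.sq_sqrt (by linarith)
        nlinarith [mul_nonneg (sub_nonneg.2 hb1) (sub_nonneg.2 hb2)]
end

section
/- With visit counts satisfying the doubling criterion—episode k ends when some state-action pair (s,a) has in-episode count u_k(s,a) equal to N_k^+(s,a) := max{1, N_k(s,a)}, where N_{k+1}(s,a) = N_k(s,a) + u_k(s,a)—the number of episodes K up to time T (with Σ_{s,a} N_{K+1}(s,a) = T) satisfies K ≤ S·A·log₂(8T/(S·A)) whenever T ≥ S·A. -/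
open Finset

lemma stmt_7_aux (n T K : ℕ) (hn : 0 < n) (hT : n ≤ T)
    (N u : ℕ → Fin n → ℕ)
    (hNrec : ∀ k sa, N (k + 1) sa = N k sa + u k sa)
    (hdouble : ∀ k ∈ Finset.Icc 1 K, ∃ sa, u k sa = max 1 (N k sa))
    (htotal : ∑ sa, N (K + 1) sa = T) :
    (K : ℝ) ≤ (n : ℝ) * Real.logb 2 (8 * T / n) := by
  classical
  have hT0 : 0 < T := lt_of_lt_of_le hn hT
  set c : Fin n → ℕ := fun sa =>
    ((Finset.Icc 1 K).filter (fun k => u k sa = max 1 (N k sa))).card with hc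
  -- Step A : K ≤ ∑ c
  have hKle : K ≤ ∑ sa, c sa := by
    have hsub : Finset.Icc 1 K ⊆ Finset.univ.biUnion
        (fun sa : Fin n => (Finset.Icc 1 K).filter (fun k => u k sa = max 1 (N k sa))) := by
      intro k hk
      obtain ⟨sa, hsa⟩ := hdouble k hk
      exact Finset.mem_biUnion.2 ⟨sa, Finset.mem_univ _, Finset.mem_filter.2 ⟨hk, hsa⟩⟩
    calc K = (Finset.Icc 1 K).card := by simp
    _ ≤ _ := Finset.card_le_card hsub
    _ ≤ ∑ sa, c sa := Finset.card_biUnion_le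
  -- Step B : doubling
  have hB : ∀ sa, 2 ^ (c sa) ≤ max 1 (2 * N (K + 1) sa) := by
    intro sa
    have key : ∀ k, 2 ^ ((Finset.Icc 1 k).filter (fun j => u j sa = max 1 (N j sa))).card
        ≤ max 1 (2 * N (k + 1) sa) := by
      intro k
      induction k with
      | zero => simp
      | succ k ih =>
        have hins : Finset.Icc 1 (k + 1) = insert (k + 1) (Finset.Icc 1 k) := by
          ext x; simp only [Finset.mem_Icc, Finset.mem_insert]; omega
        rw [hins, Finset.filter_insert]
        by_cases h : u (k + 1) sa = max 1 (N (k + 1) sa)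
        · rw [if_pos h, Finset.card_insert_of_notMem (by simp), pow_succ]
          have hrec := hNrec (k + 1) sa
          rw [h] at hrec
          have h1 := Nat.two_pow_pos
            (((Finset.Icc 1 k).filter (fun j => u j sa = max 1 (N j sa))).card)
          omega
        · rw [if_neg h]
          have hrec := hNrec (k + 1) sa
          omega
    exact key K
  -- Step C : 2 ^ K ≤ 2 ^ n * ∏ m
  set m : Fin n → ℕ := fun sa => max 1 (N (K + 1) sa) with hm
  have hC : 2 ^ K ≤ 2 ^ n * ∏ sa, m sa := by
    calc (2 : ℕ) ^ K ≤ 2 ^ (∑ sa, c sa) := Nat.pow_le_pow_right (by norm_num) hKle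
    _ = ∏ sa, 2 ^ (c sa) := by rw [Finset.prod_pow_eq_pow_sum]
    _ ≤ ∏ sa, 2 * m sa := Finset.prod_le_prod (fun _ _ => Nat.zero_le _)
        (fun sa _ => le_trans (hB sa) (by simp only [hm]; omega))
    _ = 2 ^ n * ∏ sa, m sa := by
        rw [Finset.prod_mul_distrib, Finset.prod_const, Finset.card_univ, Fintype.card_fin]
  -- Step D : ∑ m ≤ 2 T
  have hD : ∑ sa, m sa ≤ 2 * T := by
    have h1 : ∑ sa, m sa ≤ ∑ sa, (N (K + 1) sa + 1) :=
      Finset.sum_le_sum (fun sa _ => by simp only [hm]; omega)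
    rw [Finset.sum_add_distrib, htotal, Finset.sum_const, Finset.card_univ,
      Fintype.card_fin, smul_eq_mul, mul_one] at h1
    omega
  -- Step E : AM-GM in ℝ
  have hmpos : ∀ sa, (0 : ℝ) ≤ (m sa : ℝ) := fun sa => Nat.cast_nonneg _
  have hprodnn : (0 : ℝ) ≤ ∏ sa, (m sa : ℝ) := Finset.prod_nonneg fun sa _ => hmpos sa
  have hnR : (0 : ℝ) < (n : ℝ) := by exact_mod_cast hn
  have hamgm : (∏ sa, (m sa : ℝ)) ^ ((n : ℝ)⁻¹) ≤ 2 * T / n := by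
    have h := Real.geom_mean_le_arith_mean_weighted Finset.univ
      (fun _ : Fin n => (n : ℝ)⁻¹) (fun sa => (m sa : ℝ))
      (fun _ _ => by positivity)
      (by simp only [Finset.sum_const, Finset.card_univ, Fintype.card_fin, nsmul_eq_mul]
          field_simp)
      (fun sa _ => hmpos sa)
    rw [Real.finset_prod_rpow _ _ (fun sa _ => hmpos sa)] at h
    refine h.trans ?_
    rw [← Finset.mul_sum, inv_mul_eq_div, div_le_div_iff₀ hnR hnR]
    have h2 : (∑ sa, (m sa : ℝ)) ≤ 2 * T := by exact_mod_cast hD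
    nlinarith [h2]
  have hprodle : (∏ sa, (m sa : ℝ)) ≤ (2 * T / n) ^ n := by
    have h3 := Real.rpow_le_rpow (Real.rpow_nonneg hprodnn _) hamgm (le_of_lt hnR)
    rwa [← Real.rpow_mul hprodnn, inv_mul_cancel₀ hnR.ne', Real.rpow_one,
      Real.rpow_natCast] at h3
  -- combine
  have hfinal : (2 : ℝ) ^ K ≤ (4 * T / n) ^ n := by
    have h1 : ((2 : ℕ) ^ K : ℝ) ≤ ((2 ^ n * ∏ sa, m sa : ℕ) : ℝ) := by exact_mod_cast hC
    push_cast at h1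
    calc (2 : ℝ) ^ K ≤ 2 ^ n * ∏ sa, (m sa : ℝ) := h1
    _ ≤ 2 ^ n * (2 * T / n) ^ n := mul_le_mul_of_nonneg_left hprodle (by positivity)
    _ = (4 * T / n) ^ n := by rw [← mul_pow]; congr 1; field_simp; ring
  -- take logb
  have h2 : (K : ℝ) = Real.logb 2 ((2 : ℝ) ^ K) := by
    rw [Real.logb_pow, Real.logb_self_eq_one (by norm_num : (1:ℝ) < 2), mul_one]
  rw [h2]
  calc Real.logb 2 ((2:ℝ) ^ K) ≤ Real.logb 2 ((4 * T / n) ^ n) :=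
      Real.logb_le_logb_of_le (by norm_num) (by positivity) hfinal
  _ = (n : ℝ) * Real.logb 2 (4 * T / n) := by rw [Real.logb_pow]
  _ ≤ (n : ℝ) * Real.logb 2 (8 * T / n) := by
      refine mul_le_mul_of_nonneg_left ?_ (Nat.cast_nonneg _)
      refine Real.logb_le_logb_of_le (by norm_num) (by positivity) ?_
      have hTpos : (0:ℝ) < (T:ℝ) := by exact_mod_cast hT0
      gcongr
      norm_num

theorem stmt_7 (S A T K : ℕ) (hS : 0 < S) (hA : 0 < A) (hK : 0 < K)
    (hT : S * A ≤ T)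
    (N u : ℕ → Fin (S * A) → ℕ)
    (hN1 : ∀ sa, N 1 sa = 0)
    (hNrec : ∀ k sa, N (k + 1) sa = N k sa + u k sa)
    (hdouble : ∀ k ∈ Finset.Icc 1 K, ∃ sa, u k sa = max 1 (N k sa))
    (htotal : ∑ sa, N (K + 1) sa = T) :
    (K : ℝ) ≤ (S : ℝ) * A * Real.logb 2 (8 * T / (S * A)) := by
  have h := stmt_7_aux (S * A) T K (Nat.mul_pos hS hA) hT N u hNrec hdouble htotal
  push_cast at h ⊢
  exact h
end
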